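/- For every odd integer n ≥ 3, C(n, (n−1)/2)·2^{−n} ≤ √(2·e^{1/6}/(π·(n−1))). -/

import Mathlib

open Real Stirling

lemma sqrt_pi_le_stirlingSeq (n : ℕ) : Real.sqrt Real.pi ≤ stirlingSeq (n + 1) := by
  have h : Filter.Tendsto (stirlingSeq ∘ Nat.succ) Filter.atTop (nhds (Real.sqrt Real.pi)) :=
    tendsto_stirlingSeq_sqrt_pi.comp (Filter.tendsto_add_atTop_nat 1)
  exact stirlingSeq'_antitone.le_of_tendsto h n

lemma stirlingSeq_le_e_div_sqrt_two (n : ℕ) : stirlingSeq (n + 1) ≤ Real.exp 1 / Real.sqrt 2 := by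
  have := stirlingSeq'_antitone (Nat.zero_le n)
  simpa [Stirling.stirlingSeq_one] using this

lemma factorial_lower (n : ℕ) : Real.sqrt Real.pi * (Real.sqrt (2 * n) * ((n : ℝ) / Real.exp 1) ^ n) ≤ (n.factorial : ℝ) := by
  cases n with
  | zero => simp [Nat.factorial]
  | succ k =>
    have hpos : 0 < Real.sqrt (2 * (k+1 : ℕ)) * (((k+1 : ℕ) : ℝ) / Real.exp 1) ^ (k+1) := by
      positivity
    have h := sqrt_pi_le_stirlingSeq k
    rw [stirlingSeq] at h
    calc Real.sqrt Real.pi * (Real.sqrt (2 * (k+1:ℕ)) * (((k+1:ℕ) : ℝ) / Real.exp 1) ^ (k+1))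
        ≤ ((k+1).factorial : ℝ) / (Real.sqrt (2 * (k+1:ℕ)) * (((k+1:ℕ):ℝ) / Real.exp 1) ^ (k+1)) *
          (Real.sqrt (2 * (k+1:ℕ)) * (((k+1:ℕ) : ℝ) / Real.exp 1) ^ (k+1)) := by
          exact mul_le_mul_of_nonneg_right h hpos.le
      _ = ((k+1).factorial : ℝ) := div_mul_cancel₀ _ hpos.ne'

lemma factorial_upper (n : ℕ) (hn : n ≠ 0) :
    (n.factorial : ℝ) ≤ Real.exp 1 / Real.sqrt 2 * (Real.sqrt (2 * n) * ((n : ℝ) / Real.exp 1) ^ n) := by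
  obtain ⟨k, rfl⟩ := Nat.exists_eq_succ_of_ne_zero hn
  have hpos : 0 < Real.sqrt (2 * (k+1 : ℕ)) * (((k+1 : ℕ) : ℝ) / Real.exp 1) ^ (k+1) := by
    positivity
  have h := stirlingSeq_le_e_div_sqrt_two k
  rw [stirlingSeq] at h
  calc ((k+1).factorial : ℝ)
      = ((k+1).factorial : ℝ) / (Real.sqrt (2 * (k+1:ℕ)) * (((k+1:ℕ):ℝ) / Real.exp 1) ^ (k+1)) *
        (Real.sqrt (2 * (k+1:ℕ)) * (((k+1:ℕ) : ℝ) / Real.exp 1) ^ (k+1)) :=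
        (div_mul_cancel₀ _ hpos.ne').symm
    _ ≤ _ := mul_le_mul_of_nonneg_right h hpos.le

lemma central_le (m : ℕ) (hm : 1 ≤ m) :
    (((2*m).choose m : ℕ) : ℝ) ≤ Real.exp 1 / Real.sqrt 2 * 4 ^ m / (Real.pi * Real.sqrt m) := by
  have hm0 : (0:ℝ) < (m:ℝ) := by exact_mod_cast hm
  have h0 : (2*m).choose m * m.factorial * m.factorial = (2*m).factorial := by
    have := Nat.choose_mul_factorial_mul_factorial (show m ≤ 2*m by omega)
    simpa [show 2*m - m = m by omega] using this
  have hfpos : (0:ℝ) < (m.factorial : ℝ) := by exact_mod_cast m.factorial_pos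
  have hC : (((2*m).choose m : ℕ) : ℝ) = ((2*m).factorial : ℝ) / ((m.factorial : ℝ) * m.factorial) := by
    rw [eq_div_iff (by positivity), ← mul_assoc]
    exact_mod_cast congrArg (Nat.cast : ℕ → ℝ) h0
  set A : ℝ := (m:ℝ) / Real.exp 1 with hA
  have hApos : 0 < A := by positivity
  have hlo := factorial_lower m
  have hup := factorial_upper (2*m) (by omega)
  have hlopos : 0 < Real.sqrt Real.pi * (Real.sqrt (2*m) * A ^ m) := by positivity
  have hsq : (Real.sqrt Real.pi * (Real.sqrt (2*(m:ℕ)) * A ^ m))^2 ≤ (m.factorial : ℝ) * m.factorial := by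
    calc (Real.sqrt Real.pi * (Real.sqrt (2*(m:ℕ)) * A ^ m))^2
        = (Real.sqrt Real.pi * (Real.sqrt (2*(m:ℕ)) * A ^ m)) * (Real.sqrt Real.pi * (Real.sqrt (2*(m:ℕ)) * A ^ m)) := sq _
      _ ≤ (m.factorial : ℝ) * m.factorial := mul_le_mul hlo hlo hlopos.le (by positivity)
  have step : (((2*m).choose m : ℕ) : ℝ) ≤
      (Real.exp 1 / Real.sqrt 2 * (Real.sqrt (2*((2*m:ℕ):ℝ)) * (((2*m:ℕ):ℝ) / Real.exp 1) ^ (2*m))) /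
      ((Real.sqrt Real.pi * (Real.sqrt (2*(m:ℕ)) * A ^ m))^2) := by
    rw [hC]
    exact div_le_div₀ (by positivity) hup (by positivity) hsq
  refine step.trans (le_of_eq ?_)
  have hcast : ((2*m:ℕ):ℝ) = 2 * (m:ℝ) := by push_cast; ring
  have h2m : (((2*m:ℕ):ℝ) / Real.exp 1) ^ (2*m) = 4 ^ m * A ^ (2*m) := by
    rw [hcast, hA, show (2:ℝ) * (m:ℝ) / Real.exp 1 = 2 * ((m:ℝ)/Real.exp 1) by ring,
      mul_pow, pow_mul]
    norm_num
  have hs4 : Real.sqrt (2*((2*m:ℕ):ℝ)) = 2 * Real.sqrt m := by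
    rw [hcast, show (2:ℝ) * (2 * (m:ℝ)) = 2^2 * m by ring, Real.sqrt_mul (by positivity),
      Real.sqrt_sq (by norm_num)]
  have hsqpi : Real.sqrt Real.pi ^ 2 = Real.pi := Real.sq_sqrt Real.pi_pos.le
  have hsqm : Real.sqrt ((2*(m:ℕ)):ℝ) ^ 2 = 2 * (m:ℝ) := Real.sq_sqrt (by positivity)
  have hAm : (A ^ m)^2 = A ^ (2*m) := by rw [← pow_mul, mul_comm]
  have hsmpos : 0 < Real.sqrt (m:ℝ) := Real.sqrt_pos.mpr hm0
  rw [h2m, hs4, mul_pow, mul_pow, hsqpi, hsqm, hAm]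
  have hA2m : 0 < A ^ (2*m) := pow_pos hApos _
  rw [div_eq_div_iff (by positivity) (by positivity)]
  have hsm : Real.sqrt (m:ℝ) * Real.sqrt (m:ℝ) = (m:ℝ) := Real.mul_self_sqrt hm0.le
  linear_combination (Real.exp 1 / Real.sqrt 2 * 4^m * A^(2*m) * Real.pi * 2) * hsm

lemma num_key : Real.exp 1 / Real.sqrt 2 / Real.pi ≤ Real.exp (1/12) / Real.sqrt Real.pi := by
  have h11 : Real.exp (11/6 : ℝ) ≤ 2 * Real.pi := by
    have h1 : Real.exp (11/6:ℝ) ^ 6 = Real.exp 11 := by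
      rw [← Real.exp_nat_mul]; norm_num
    have h2 : Real.exp 11 ≤ (2*Real.pi)^6 := by
      calc Real.exp 11 = Real.exp 1 ^ 11 := by rw [← Real.exp_nat_mul]; norm_num
        _ ≤ 2.7182818286 ^ 11 := pow_le_pow_left₀ (Real.exp_pos 1).le Real.exp_one_lt_d9.le 11
        _ ≤ 6.283184 ^ 6 := by norm_num
        _ ≤ (2*Real.pi)^6 := by
            apply pow_le_pow_left₀ (by norm_num)
            have := Real.pi_gt_d6; linarith
    exact (pow_le_pow_iff_left₀ (Real.exp_pos _).le (by positivity) (by norm_num)).mp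
      (h1 ▸ h2)
  have hsq : (Real.exp 1 / Real.sqrt 2 / Real.pi)^2 ≤ (Real.exp (1/12) / Real.sqrt Real.pi)^2 := by
    rw [div_pow, div_pow, div_pow, Real.sq_sqrt (by norm_num : (0:ℝ) ≤ 2),
      Real.sq_sqrt Real.pi_pos.le]
    have he2 : Real.exp 1 ^ 2 = Real.exp (11/6) * Real.exp (1/6) := by
      rw [← Real.exp_nat_mul, ← Real.exp_add]; norm_num
    have he12 : Real.exp (1/12:ℝ) ^ 2 = Real.exp (1/6) := by
      rw [← Real.exp_nat_mul]; norm_num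
    rw [he2, he12, div_div, div_le_div_iff₀ (by positivity) Real.pi_pos]
    have h6 := Real.exp_pos (1/6:ℝ)
    nlinarith [Real.pi_pos, mul_pos h6 Real.pi_pos]
  exact (pow_le_pow_iff_left₀ (by positivity) (by positivity) (by norm_num)).mp hsq

theorem central_binom_bound_odd (n : ℕ) (hn : 3 ≤ n) (hodd : Odd n) :
    (n.choose ((n - 1) / 2) : ℝ) / 2 ^ n ≤
      Real.sqrt (2 * Real.exp (1 / 6) / (Real.pi * (n - 1 : ℝ))) := by
  obtain ⟨m, rfl⟩ := hodd
  have hm : 1 ≤ m := by omega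
  have hm0 : (0:ℝ) < (m:ℝ) := by exact_mod_cast hm
  have hidx : (2*m+1-1)/2 = m := by omega
  rw [hidx]
  have hcast : ((2*m+1 : ℕ) : ℝ) - 1 = 2 * (m:ℝ) := by push_cast; ring
  rw [hcast]
  -- RHS equals exp(1/12) / (√π * √m)
  have hE : Real.sqrt (2 * Real.exp (1/6) / (Real.pi * (2 * (m:ℝ)))) =
      Real.exp (1/12) / (Real.sqrt Real.pi * Real.sqrt m) := by
    have h1 : 2 * Real.exp (1/6) / (Real.pi * (2 * (m:ℝ))) = Real.exp (1/6) / (Real.pi * m) := by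
      field_simp
    have he12 : Real.exp (1/12:ℝ) ^ 2 = Real.exp (1/6) := by
      rw [← Real.exp_nat_mul]; norm_num
    rw [h1, Real.sqrt_div (Real.exp_pos _).le, Real.sqrt_mul Real.pi_pos.le, ← he12,
      Real.sqrt_sq (Real.exp_pos _).le]
  rw [hE]
  -- Pascal: choose (2m+1) m ≤ 2 * choose (2m) m
  have hch : (2*m+1).choose m ≤ 2 * ((2*m).choose m) := by
    obtain ⟨k, rfl⟩ : ∃ k, m = k + 1 := ⟨m - 1, by omega⟩
    rw [show 2*(k+1)+1 = (2*(k+1))+1 by ring, Nat.choose_succ_succ' (2*(k+1)) k]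
    have h1 : (2*(k+1)).choose k ≤ (2*(k+1)).choose ((2*(k+1))/2) := Nat.choose_le_middle k _
    have h2 : (2*(k+1))/2 = k+1 := by omega
    rw [h2] at h1
    omega
  have hC := central_le m hm
  have h4 : (0:ℝ) < 4 ^ m := by positivity
  have hsmpos : 0 < Real.sqrt (m:ℝ) := Real.sqrt_pos.mpr hm0
  have hsppos : 0 < Real.sqrt Real.pi := Real.sqrt_pos.mpr Real.pi_pos
  have hpow : (2:ℝ) ^ (2*m+1) = 2 * 4 ^ m := by
    rw [pow_succ, pow_mul]; norm_num; ring
  calc ((2*m+1).choose m : ℝ) / 2 ^ (2*m+1)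
      ≤ (2 * ((2*m).choose m) : ℝ) / (2 * 4 ^ m) := by
        rw [hpow]
        apply div_le_div_of_nonneg_right ?_ (by positivity)
        exact_mod_cast hch
    _ = ((2*m).choose m : ℝ) / 4 ^ m := by push_cast; field_simp
    _ ≤ (Real.exp 1 / Real.sqrt 2 * 4 ^ m / (Real.pi * Real.sqrt m)) / 4 ^ m := by
        apply div_le_div_of_nonneg_right hC (by positivity)
    _ = (Real.exp 1 / Real.sqrt 2 / Real.pi) / Real.sqrt m := by field_simp
    _ ≤ (Real.exp (1/12) / Real.sqrt Real.pi) / Real.sqrt m := by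
        apply div_le_div_of_nonneg_right num_key hsmpos.le
    _ = Real.exp (1/12) / (Real.sqrt Real.pi * Real.sqrt m) := by field_simp
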